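/- For all x, x̃ ∈ ℝⁿ, ∫_Ω ‖∇f_η(x) − ∇f_η(x̃) + ∇f(x̃)‖² dμ(η) ≤ 4 L_sup (f(x) − 2 f(x*) + f(x̃)). (Equivalently, if η is a random variable with law μ and v = ∇f_η(x) − ∇f_η(x̃) + ∇f(x̃), then E‖v‖² ≤ 4L_sup(f(x) − 2f(x*) + f(x̃)).) -/

import Mathlib

open MeasureTheory
open Set
open scoped RealInnerProductSpace

section Helpers

variable {E : Type*} [NormedAddCommGroup E] [InnerProductSpace ℝ E] [CompleteSpace E]

lemma svrg_line_hasDerivAt (f : E → ℝ) (hdiff : Differentiable ℝ f) (x d : E) (t : ℝ) :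
    HasDerivAt (fun s : ℝ => f (x + s • d)) ⟪gradient f (x + t • d), d⟫ t := by
  have hg := (hdiff (x + t • d)).hasGradientAt
  rw [hasGradientAt_iff_hasFDerivAt] at hg
  have hc : HasDerivAt (fun s : ℝ => x + s • d) d t := by
    simpa using ((hasDerivAt_id t).smul_const d).const_add x
  have := hg.comp_hasDerivAt t hc
  simpa [InnerProductSpace.toDual_apply_apply, Function.comp_def] using this

lemma svrg_descent_lemma (f : E → ℝ) (hdiff : Differentiable ℝ f) (C : NNReal)
    (hLip : LipschitzWith C (gradient f)) (x d : E) :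
    f (x + d) ≤ f x + ⟪gradient f x, d⟫ + C / 2 * ‖d‖ ^ 2 := by
  set c : ℝ := ⟪gradient f x, d⟫ with hc
  set k : ℝ := (C : ℝ) / 2 * ‖d‖ ^ 2 with hk
  set ψ : ℝ → ℝ := fun t => f (x + t • d) - (t * c + k * t ^ 2) with hψ
  have hψd : ∀ t : ℝ, HasDerivAt ψ (⟪gradient f (x + t • d), d⟫ - (c + k * (2 * t))) t := by
    intro t
    have hpoly : HasDerivAt (fun t : ℝ => t * c + k * t ^ 2) (c + k * (2 * t)) t := by
      have := ((hasDerivAt_id t).mul_const c).add ((hasDerivAt_pow 2 t).const_mul k)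
      exact this.congr_deriv (by push_cast; ring)
    exact (svrg_line_hasDerivAt f hdiff x d t).sub hpoly
  have hmono : AntitoneOn ψ (Icc (0:ℝ) 1) := by
    apply antitoneOn_of_deriv_nonpos (convex_Icc 0 1)
    · exact ((hdiff.continuous.comp (by continuity)).sub (by continuity)).continuousOn
    · intro t ht
      exact (hψd t).differentiableAt.differentiableWithinAt
    · intro t ht
      rw [interior_Icc] at ht
      rw [(hψd t).deriv]
      have h1 : ⟪gradient f (x + t • d) - gradient f x, d⟫ ≤ (C : ℝ) * t * ‖d‖ ^ 2 := by
        calc ⟪gradient f (x + t • d) - gradient f x, d⟫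
            ≤ ‖gradient f (x + t • d) - gradient f x‖ * ‖d‖ := real_inner_le_norm _ _
          _ ≤ ((C : ℝ) * ‖t • d‖) * ‖d‖ := by
              gcongr
              have := hLip.dist_le_mul (x + t • d) x
              simpa [dist_eq_norm] using this
          _ = (C : ℝ) * t * ‖d‖ ^ 2 := by
              rw [norm_smul, Real.norm_eq_abs, abs_of_pos ht.1]; ring
      have h2 : ⟪gradient f (x + t • d), d⟫ - c = ⟪gradient f (x + t • d) - gradient f x, d⟫ := by
        rw [inner_sub_left]
      have hk2 : k * (2 * t) = (C : ℝ) * t * ‖d‖ ^ 2 := by rw [hk]; ring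
      linarith
  have := hmono (left_mem_Icc.2 zero_le_one) (right_mem_Icc.2 zero_le_one) zero_le_one
  simp only [hψ, one_smul, zero_smul, add_zero, one_pow, mul_one, mul_zero, zero_pow,
    one_mul, zero_mul, add_zero, sub_zero] at this
  linarith [this]

lemma svrg_first_order (f : E → ℝ) (hconv : ConvexOn ℝ univ f) (hdiff : Differentiable ℝ f)
    (x y : E) : f x + ⟪gradient f x, y - x⟫ ≤ f y := by
  have hfun : (fun s : ℝ => f (x + s • (y - x))) = f ∘ (AffineMap.lineMap x y : ℝ →ᵃ[ℝ] E) := by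
    funext s
    simp [AffineMap.lineMap_apply, add_comm]
  have hφconv : ConvexOn ℝ univ (f ∘ (AffineMap.lineMap x y : ℝ →ᵃ[ℝ] E)) := by
    simpa using hconv.comp_affineMap (AffineMap.lineMap x y : ℝ →ᵃ[ℝ] E)
  have hd : HasDerivAt (f ∘ (AffineMap.lineMap x y : ℝ →ᵃ[ℝ] E)) ⟪gradient f x, y - x⟫ 0 := by
    have := svrg_line_hasDerivAt f hdiff x (y - x) 0
    rw [hfun] at this
    simpa using this
  have := hφconv.le_slope_of_hasDerivAt (Set.mem_univ (0:ℝ)) (Set.mem_univ (1:ℝ))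
    zero_lt_one hd
  rw [slope_def_field] at this
  simp only [Function.comp_apply, AffineMap.lineMap_apply_one, AffineMap.lineMap_apply_zero] at this
  have h2 : (f y - f x) / (1 - 0) = f y - f x := by norm_num
  rw [h2] at this
  linarith [this]

lemma svrg_cocoercive (f : E → ℝ) (hconv : ConvexOn ℝ univ f) (hdiff : Differentiable ℝ f)
    (C : NNReal) (hLip : LipschitzWith C (gradient f)) (x y : E) :
    ‖gradient f x - gradient f y‖ ^ 2 ≤ 2 * C * (f x - f y - ⟪gradient f y, x - y⟫) := by
  rcases eq_or_lt_of_le C.coe_nonneg with hC | hC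
  · have h0 : gradient f x = gradient f y := by
      have := hLip.dist_le_mul x y
      rw [← hC] at this
      simp only [zero_mul] at this
      exact dist_le_zero.mp this
    have h1 := svrg_first_order f hconv hdiff y x
    rw [h0]
    simp only [sub_self, norm_zero]
    rw [← hC]
    nlinarith [h1]
  set c := gradient f y with hcdef
  set g : E → ℝ := fun z => f z - ⟪c, z⟫ with hg
  have hinnerdiff : Differentiable ℝ (fun z : E => ⟪c, z⟫) :=
    (differentiable_const c).inner ℝ differentiable_id
  have hgd : Differentiable ℝ g := hdiff.sub hinnerdiff
  have hdual : InnerProductSpace.toDual ℝ E c = innerSL ℝ c := by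
    ext w; simp [InnerProductSpace.toDual_apply_apply]
  have hgradg : ∀ z, HasGradientAt g (gradient f z - c) z := by
    intro z
    rw [hasGradientAt_iff_hasFDerivAt, map_sub]
    have h1 : HasFDerivAt f (InnerProductSpace.toDual ℝ E (gradient f z)) z := by
      rw [← hasGradientAt_iff_hasFDerivAt]; exact (hdiff z).hasGradientAt
    have h2 : HasFDerivAt (fun w : E => ⟪c, w⟫) (InnerProductSpace.toDual ℝ E c) z := by
      rw [hdual]
      exact (innerSL ℝ c).hasFDerivAt
    exact h1.sub h2
  have hgradg' : gradient g = fun z => gradient f z - c := funext fun z => (hgradg z).gradient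
  have hgconv : ConvexOn ℝ univ g := by
    refine ⟨convex_univ, fun a _ b _ s t hs ht hst => ?_⟩
    have := hconv.2 (mem_univ a) (mem_univ b) hs ht hst
    simp only [smul_eq_mul] at this
    simp only [hg, smul_eq_mul]
    rw [inner_add_right, real_inner_smul_right, real_inner_smul_right]
    linarith
  have hgLip : LipschitzWith C (gradient g) := by
    rw [hgradg']
    intro a b
    have := hLip a b
    simpa [edist_sub_right] using this
  have hmin : ∀ z, g y ≤ g z := by
    intro z
    have := svrg_first_order g hgconv hgd y z
    rw [hgradg'] at this
    simpa [hcdef] using this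
  set u := gradient f x - c with hu
  set d : E := -((C : ℝ)⁻¹ • u) with hd
  have hdesc := svrg_descent_lemma g hgd C hgLip x d
  have hmin' := hmin (x + d)
  have hgx : gradient g x = u := by rw [hgradg']
  rw [hgx] at hdesc
  have hinner : ⟪u, d⟫ = -((C : ℝ)⁻¹ * ‖u‖ ^ 2) := by
    rw [hd, inner_neg_right, real_inner_smul_right, real_inner_self_eq_norm_sq]
  have hnd : ‖d‖ ^ 2 = ((C : ℝ)⁻¹) ^ 2 * ‖u‖ ^ 2 := by
    rw [hd, norm_neg, norm_smul, Real.norm_eq_abs, abs_of_pos (by positivity), mul_pow]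
  rw [hinner, hnd] at hdesc
  have hkey : g y ≤ g x - 1 / (2 * C) * ‖u‖ ^ 2 := by
    refine le_trans hmin' (le_trans hdesc (le_of_eq ?_))
    field_simp
    ring
  have hgsub : g x - g y = f x - f y - ⟪c, x - y⟫ := by
    simp only [hg]
    rw [inner_sub_right]
    ring
  have : 1 / (2 * C) * ‖u‖ ^ 2 ≤ g x - g y := by linarith
  rw [hgsub] at this
  have h2C : (0:ℝ) < 2 * C := by positivity
  calc ‖u‖ ^ 2 = 2 * C * (1 / (2 * C) * ‖u‖ ^ 2) := by field_simp
    _ ≤ 2 * C * (f x - f y - ⟪c, x - y⟫) := by nlinarith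

end Helpers

/-- **Second moment bound for the SVRG variance-reduced stochastic gradient
(Corollary A.3).**
Let `(Ω, μ)` be a probability space and, for each `η ∈ Ω`, let
`f_η : ℝⁿ → ℝ` be convex and differentiable with `∇f_η` Lipschitz with
constant `L_η ≤ L_sup < ∞`.  Let `f(x) = ∫ f_η(x) dμ(η)` with
`∇f(x) = ∫ ∇f_η(x) dμ(η)`, and let `x*` be a global minimizer of `f`.  Then
for all `x, x̃`, with `v(η) = ∇f_η(x) − ∇f_η(x̃) + ∇f(x̃)` one has
`∫ ‖v(η)‖² dμ(η) ≤ 4 L_sup (f(x) − 2 f(x*) + f(x̃))`. -/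
theorem svrg_variance_reduced_gradient_bound
    {Ω : Type*} [MeasurableSpace Ω] (μ : Measure Ω) [IsProbabilityMeasure μ]
    {n : ℕ} (f : Ω → EuclideanSpace ℝ (Fin n) → ℝ)
    (hconv : ∀ η, ConvexOn ℝ Set.univ (f η))
    (hdiff : ∀ η, Differentiable ℝ (f η))
    (L : Ω → NNReal) (hLip : ∀ η, LipschitzWith (L η) (gradient (f η)))
    (Lsup : NNReal) (hLsup : ∀ η, L η ≤ Lsup)
    (hfint : ∀ x, Integrable (fun η => f η x) μ)
    (hgint : ∀ x, Integrable (fun η => gradient (f η) x) μ)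
    (F : EuclideanSpace ℝ (Fin n) → ℝ) (hF : ∀ x, F x = ∫ η, f η x ∂μ)
    (hgrad : ∀ x, gradient F x = ∫ η, gradient (f η) x ∂μ)
    (xstar : EuclideanSpace ℝ (Fin n)) (hxstar : ∀ y, F xstar ≤ F y) :
    ∀ x xt : EuclideanSpace ℝ (Fin n),
      ∫ η, ‖gradient (f η) x - gradient (f η) xt + gradient F xt‖ ^ 2 ∂μ
        ≤ 4 * (Lsup : ℝ) * (F x - 2 * F xstar + F xt) := by
  intro x xt
  -- gradient of F at the minimizer is zero
  have hgz : gradient F xstar = 0 := by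
    have hloc : IsLocalMin F xstar := Filter.Eventually.of_forall (fun y => hxstar y)
    rw [gradient, hloc.fderiv_eq_zero, map_zero]
  -- Lipschitz with Lsup
  have hLs : ∀ η, LipschitzWith Lsup (gradient (f η)) := fun η => (hLip η).weaken (hLsup η)
  -- cocoercivity bounds
  have coco1 : ∀ η, ‖gradient (f η) x - gradient (f η) xstar‖ ^ 2
      ≤ 2 * (Lsup : ℝ) * (f η x - f η xstar - ⟪gradient (f η) xstar, x - xstar⟫) :=
    fun η => svrg_cocoercive (f η) (hconv η) (hdiff η) Lsup (hLs η) x xstar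
  have coco2 : ∀ η, ‖gradient (f η) xt - gradient (f η) xstar‖ ^ 2
      ≤ 2 * (Lsup : ℝ) * (f η xt - f η xstar - ⟪gradient (f η) xstar, xt - xstar⟫) :=
    fun η => svrg_cocoercive (f η) (hconv η) (hdiff η) Lsup (hLs η) xt xstar
  -- measurability
  have gsm : ∀ z, AEStronglyMeasurable (fun η => gradient (f η) z) μ := fun z => (hgint z).1
  -- integrability of the inner-product terms against gradients at xstar
  have hinner_int : ∀ z : EuclideanSpace ℝ (Fin n), Integrable (fun η => ⟪gradient (f η) xstar, z⟫) μ := by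
    intro z
    have : Integrable (fun η => (innerSL ℝ z) (gradient (f η) xstar)) μ :=
      ContinuousLinearMap.integrable_comp (innerSL ℝ z) (hgint xstar)
    exact this.congr (Filter.Eventually.of_forall fun η => by
      simp only [innerSL_apply_apply]; exact real_inner_comm _ _)
  have hinner_int_val : ∀ z : EuclideanSpace ℝ (Fin n), ∫ η, ⟪gradient (f η) xstar, z⟫ ∂μ = 0 := by
    intro z
    have h1 : ∫ η, (innerSL ℝ z) (gradient (f η) xstar) ∂μ = (innerSL ℝ z) (∫ η, gradient (f η) xstar ∂μ) :=
      ContinuousLinearMap.integral_comp_comm _ (hgint xstar)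
    have h2 : (∫ η, gradient (f η) xstar ∂μ) = gradient F xstar := (hgrad xstar).symm
    have h3 : ∫ η, ⟪gradient (f η) xstar, z⟫ ∂μ = ∫ η, (innerSL ℝ z) (gradient (f η) xstar) ∂μ := by
      congr 1; funext η; simp only [innerSL_apply_apply]; exact real_inner_comm _ _
    rw [h3, h1, h2, hgz, map_zero]
  -- bounds (integrable majorants)
  set φ1 : Ω → ℝ := fun η => 2 * (Lsup : ℝ) * (f η x - f η xstar - ⟪gradient (f η) xstar, x - xstar⟫)
    with hφ1
  set φ2 : Ω → ℝ := fun η => 2 * (Lsup : ℝ) * (f η xt - f η xstar - ⟪gradient (f η) xstar, xt - xstar⟫)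
    with hφ2
  have hsub1 : Integrable (fun η => f η x - f η xstar) μ := (hfint x).sub (hfint xstar)
  have hsub2 : Integrable (fun η => f η xt - f η xstar) μ := (hfint xt).sub (hfint xstar)
  have hsub1' : Integrable (fun η => f η x - f η xstar - ⟪gradient (f η) xstar, x - xstar⟫) μ :=
    hsub1.sub (hinner_int (x - xstar))
  have hsub2' : Integrable (fun η => f η xt - f η xstar - ⟪gradient (f η) xstar, xt - xstar⟫) μ :=
    hsub2.sub (hinner_int (xt - xstar))
  have hφ1int : Integrable φ1 μ := hsub1'.const_mul _
  have hφ2int : Integrable φ2 μ := hsub2'.const_mul _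
  have hφ1val : ∫ η, φ1 η ∂μ = 2 * (Lsup : ℝ) * (F x - F xstar) := by
    rw [hφ1, integral_const_mul, integral_sub hsub1 (hinner_int (x - xstar)),
      integral_sub (hfint x) (hfint xstar), hinner_int_val, hF x, hF xstar]
    ring
  have hφ2val : ∫ η, φ2 η ∂μ = 2 * (Lsup : ℝ) * (F xt - F xstar) := by
    rw [hφ2, integral_const_mul, integral_sub hsub2 (hinner_int (xt - xstar)),
      integral_sub (hfint xt) (hfint xstar), hinner_int_val, hF xt, hF xstar]
    ring
  -- integrability of the squared norms
  have hNa : AEStronglyMeasurable (fun η => ‖gradient (f η) x - gradient (f η) xstar‖ ^ 2) μ :=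
    (((gsm x).sub (gsm xstar)).norm).pow 2
  have hNb : AEStronglyMeasurable (fun η => ‖gradient (f η) xt - gradient (f η) xstar‖ ^ 2) μ :=
    (((gsm xt).sub (gsm xstar)).norm).pow 2
  have hIa : Integrable (fun η => ‖gradient (f η) x - gradient (f η) xstar‖ ^ 2) μ := by
    refine hφ1int.mono' hNa (Filter.Eventually.of_forall fun η => ?_)
    rw [Real.norm_of_nonneg (by positivity)]
    exact coco1 η
  have hIb : Integrable (fun η => ‖gradient (f η) xt - gradient (f η) xstar‖ ^ 2) μ := by
    refine hφ2int.mono' hNb (Filter.Eventually.of_forall fun η => ?_)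
    rw [Real.norm_of_nonneg (by positivity)]
    exact coco2 η
  have hIa_val : ∫ η, ‖gradient (f η) x - gradient (f η) xstar‖ ^ 2 ∂μ ≤ 2 * (Lsup : ℝ) * (F x - F xstar) := by
    rw [← hφ1val]
    exact integral_mono hIa hφ1int coco1
  have hIb_val : ∫ η, ‖gradient (f η) xt - gradient (f η) xstar‖ ^ 2 ∂μ ≤ 2 * (Lsup : ℝ) * (F xt - F xstar) := by
    rw [← hφ2val]
    exact integral_mono hIb hφ2int coco2
  -- the centered second factor
  set w : EuclideanSpace ℝ (Fin n) := gradient F xt with hw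
  set b' : Ω → EuclideanSpace ℝ (Fin n) := fun η => gradient (f η) xt - gradient (f η) xstar - w with hb'
  have hb'sq : ∀ η, ‖b' η‖ ^ 2
      = ‖gradient (f η) xt - gradient (f η) xstar‖ ^ 2 - 2 * ⟪gradient (f η) xt - gradient (f η) xstar, w⟫ + ‖w‖ ^ 2 := by
    intro η
    rw [hb']
    simp only
    rw [norm_sub_sq_real]
  have hinn_bw_int : Integrable (fun η => ⟪gradient (f η) xt - gradient (f η) xstar, w⟫) μ := by
    have : Integrable (fun η => (innerSL ℝ w) (gradient (f η) xt - gradient (f η) xstar)) μ :=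
      ContinuousLinearMap.integrable_comp (innerSL ℝ w) ((hgint xt).sub (hgint xstar))
    exact this.congr (Filter.Eventually.of_forall fun η => by
      simp only [innerSL_apply_apply]; exact real_inner_comm _ _)
  have hinn_bw_val : ∫ η, ⟪gradient (f η) xt - gradient (f η) xstar, w⟫ ∂μ = ‖w‖ ^ 2 := by
    have h1 : ∫ η, (innerSL ℝ w) (gradient (f η) xt - gradient (f η) xstar) ∂μ
        = (innerSL ℝ w) (∫ η, (gradient (f η) xt - gradient (f η) xstar) ∂μ) :=
      ContinuousLinearMap.integral_comp_comm _ ((hgint xt).sub (hgint xstar))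
    have h2 : (∫ η, (gradient (f η) xt - gradient (f η) xstar) ∂μ) = w := by
      rw [integral_sub (hgint xt) (hgint xstar), ← hgrad xt, ← hgrad xstar, hgz, sub_zero]
    have h3 : ∫ η, ⟪gradient (f η) xt - gradient (f η) xstar, w⟫ ∂μ
        = ∫ η, (innerSL ℝ w) (gradient (f η) xt - gradient (f η) xstar) ∂μ := by
      congr 1; funext η; simp only [innerSL_apply_apply]; exact real_inner_comm _ _
    rw [h3, h1, h2, innerSL_apply_apply, real_inner_self_eq_norm_sq]
  have hIb' : Integrable (fun η => ‖b' η‖ ^ 2) μ := by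
    have : Integrable (fun η => ‖gradient (f η) xt - gradient (f η) xstar‖ ^ 2
        - 2 * ⟪gradient (f η) xt - gradient (f η) xstar, w⟫ + ‖w‖ ^ 2) μ :=
      (hIb.sub (hinn_bw_int.const_mul 2)).add (integrable_const _)
    exact this.congr (Filter.Eventually.of_forall fun η => (hb'sq η).symm)
  have hIb'_val : ∫ η, ‖b' η‖ ^ 2 ∂μ ≤ 2 * (Lsup : ℝ) * (F xt - F xstar) := by
    have heq : ∫ η, ‖b' η‖ ^ 2 ∂μ
        = ∫ η, ‖gradient (f η) xt - gradient (f η) xstar‖ ^ 2 ∂μ - 2 * ∫ η, ⟪gradient (f η) xt - gradient (f η) xstar, w⟫ ∂μ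
          + ‖w‖ ^ 2 * (μ Set.univ).toReal := by
      rw [show (fun η => ‖b' η‖ ^ 2) = fun η => ‖gradient (f η) xt - gradient (f η) xstar‖ ^ 2
          - 2 * ⟪gradient (f η) xt - gradient (f η) xstar, w⟫ + ‖w‖ ^ 2 from funext hb'sq]
      have h1 : Integrable (fun η => ‖gradient (f η) xt - gradient (f η) xstar‖ ^ 2
          - 2 * ⟪gradient (f η) xt - gradient (f η) xstar, w⟫) μ :=
        hIb.sub (hinn_bw_int.const_mul 2)
      rw [integral_add h1 (integrable_const _),
        integral_sub hIb (hinn_bw_int.const_mul 2), integral_const_mul, integral_const]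
      simp only [smul_eq_mul, measureReal_def]
      ring
    rw [heq, hinn_bw_val]
    simp only [measure_univ, ENNReal.toReal_one, mul_one]
    have h1 : (0:ℝ) ≤ ‖w‖ ^ 2 := by positivity
    linarith [hIb_val]
  -- pointwise bound for the main integrand
  have hpt : ∀ η, ‖gradient (f η) x - gradient (f η) xt + gradient F xt‖ ^ 2
      ≤ 2 * ‖gradient (f η) x - gradient (f η) xstar‖ ^ 2 + 2 * ‖b' η‖ ^ 2 := by
    intro η
    have hvid : gradient (f η) x - gradient (f η) xt + gradient F xt = (gradient (f η) x - gradient (f η) xstar) - b' η := by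
      simp only [hb', hw]
      abel
    rw [hvid]
    have h1 : ‖(gradient (f η) x - gradient (f η) xstar) - b' η‖ ≤ ‖gradient (f η) x - gradient (f η) xstar‖ + ‖b' η‖ := norm_sub_le _ _
    have h2 : ‖(gradient (f η) x - gradient (f η) xstar) - b' η‖ ^ 2
        ≤ (‖gradient (f η) x - gradient (f η) xstar‖ + ‖b' η‖) ^ 2 :=
      pow_le_pow_left₀ (norm_nonneg _) h1 2
    nlinarith [h2, sq_nonneg (‖gradient (f η) x - gradient (f η) xstar‖ - ‖b' η‖)]
  -- integrability of main integrand
  have hVsm : AEStronglyMeasurable (fun η => ‖gradient (f η) x - gradient (f η) xt + gradient F xt‖ ^ 2) μ :=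
    ((((gsm x).sub (gsm xt)).add aestronglyMeasurable_const).norm).pow 2
  have hmajor : Integrable (fun η => 2 * ‖gradient (f η) x - gradient (f η) xstar‖ ^ 2 + 2 * ‖b' η‖ ^ 2) μ :=
    (hIa.const_mul 2).add (hIb'.const_mul 2)
  have hIV : Integrable (fun η => ‖gradient (f η) x - gradient (f η) xt + gradient F xt‖ ^ 2) μ := by
    refine hmajor.mono' hVsm (Filter.Eventually.of_forall fun η => ?_)
    rw [Real.norm_of_nonneg (by positivity)]
    exact hpt η
  -- put it together
  calc ∫ η, ‖gradient (f η) x - gradient (f η) xt + gradient F xt‖ ^ 2 ∂μ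
      ≤ ∫ η, (2 * ‖gradient (f η) x - gradient (f η) xstar‖ ^ 2 + 2 * ‖b' η‖ ^ 2) ∂μ :=
        integral_mono hIV hmajor hpt
    _ = 2 * ∫ η, ‖gradient (f η) x - gradient (f η) xstar‖ ^ 2 ∂μ + 2 * ∫ η, ‖b' η‖ ^ 2 ∂μ := by
        rw [integral_add (hIa.const_mul 2) (hIb'.const_mul 2), integral_const_mul,
          integral_const_mul]
    _ ≤ 2 * (2 * (Lsup : ℝ) * (F x - F xstar)) + 2 * (2 * (Lsup : ℝ) * (F xt - F xstar)) := by
        have hL0 : (0:ℝ) ≤ (Lsup : ℝ) := Lsup.coe_nonneg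
        gcongr ?_ + ?_
        · linarith [hIa_val]
        · linarith [hIb'_val]
    _ = 4 * (Lsup : ℝ) * (F x - 2 * F xstar + F xt) := by ring
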